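/- arXiv:2010.07112 — 5 statements merged into one kernel-verified Lean document; each statement's English description precedes it below -/
import Mathlib

section
/- For every integer $m \geq 2$ and every complex number $z$ that is not of the form $n\omega_m^{-j}$ for positive integers $n$ and $0 \leq j \leq m-1$, the infinite product $\prod_{n=1}^{\infty}\frac{n^m}{n^m - z^m}$ converges and equals $\prod_{j=0}^{m-1}\Gamma(1-\omega_m^j z)$, where $\omega_m = e^{2\pi i/m}$. -/
open Finset Complex

lemma aux_pow_sub_pow_prod (m : ℕ) (hm : m ≠ 0) (x z : ℂ) :
    x ^ m - z ^ m =
      ∏ j ∈ Finset.range m, (x - Complex.exp (2 * Real.pi * Complex.I / m) ^ j * z) := by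
  have hω := Complex.isPrimitiveRoot_exp m hm
  set ω := Complex.exp (2 * Real.pi * Complex.I / m) with hωdef
  have hroots : Polynomial.nthRoots m ((z : ℂ) ^ m) = (Multiset.range m).map (ω ^ · * z) :=
    hω.nthRoots_eq rfl
  have hmonic : (Polynomial.X ^ m - Polynomial.C (z ^ m) : Polynomial ℂ).Monic :=
    Polynomial.monic_X_pow_sub_C _ hm
  have hcard : (Polynomial.X ^ m - Polynomial.C (z ^ m) : Polynomial ℂ).roots.card =
      (Polynomial.X ^ m - Polynomial.C (z ^ m) : Polynomial ℂ).natDegree := by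
    rw [Polynomial.natDegree_X_pow_sub_C, ← Polynomial.nthRoots, hroots]
    simp
  have h := Polynomial.prod_multiset_X_sub_C_of_monic_of_roots_card_eq hmonic hcard
  have h2 := congrArg (Polynomial.eval x) h
  rw [Polynomial.eval_multiset_prod] at h2
  have h3 : Polynomial.eval x (Polynomial.X ^ m - Polynomial.C (z ^ m)) = x ^ m - z ^ m := by
    simp
  rw [h3] at h2
  rw [← h2, ← Polynomial.nthRoots, hroots, Multiset.map_map, Multiset.map_map]
  rw [Finset.prod_eq_multiset_prod, Finset.range_val]
  simp [Function.comp]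

lemma aux_sum_omega_pow (m : ℕ) (hm : 2 ≤ m) :
    ∑ j ∈ Finset.range m, Complex.exp (2 * Real.pi * Complex.I / m) ^ j = 0 := by
  have hω := Complex.isPrimitiveRoot_exp m (by omega)
  rw [geom_sum_eq (hω.ne_one (by omega)), hω.pow_eq_one]
  simp

lemma aux_gs_eq (w : ℂ) (hw : w ≠ 0) (N : ℕ) (hN : 1 ≤ N) :
    ∏ i ∈ Finset.range N, (((i : ℂ) + 1) / (((i : ℂ) + 1) + w)) =
      (w * Complex.GammaSeq w N) * (N : ℂ) ^ (-w) := by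
  have hN0 : (N : ℂ) ≠ 0 := Nat.cast_ne_zero.mpr (by omega)
  have hNw : (N : ℂ) ^ (w : ℂ) ≠ 0 := by
    simp [Complex.cpow_eq_zero_iff, hN0]
  have hfact : ∏ i ∈ Finset.range N, ((i : ℂ) + 1) = (Nat.factorial N : ℂ) := by
    rw [← Finset.prod_range_add_one_eq_factorial]
    push_cast
    rfl
  have hden : ∏ j ∈ Finset.range (N + 1), (w + (j : ℂ)) =
      w * ∏ i ∈ Finset.range N, (((i : ℂ) + 1) + w) := by
    rw [Finset.prod_range_succ']
    push_cast
    rw [mul_comm, add_zero]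
    congr 1
    apply Finset.prod_congr rfl
    intro i _
    ring
  rw [Finset.prod_div_distrib, hfact, Complex.GammaSeq, hden, Complex.cpow_neg]
  rw [show ∏ x ∈ Finset.range N, ((x : ℂ) + 1 + w) = ∏ x ∈ Finset.range N, (1 + (x : ℂ) + w)
    from Finset.prod_congr rfl fun i _ => by ring]
  by_cases hP : ∏ x ∈ Finset.range N, (1 + (x : ℂ) + w) = 0
  · simp [hP]
  · field_simp

theorem stmt_3 (m : ℕ) (hm : 2 ≤ m) (z : ℂ)
    (hz : ∀ (n : ℕ+) (j : Fin m),
      z ≠ (n : ℂ) * (Complex.exp (2 * Real.pi * Complex.I / m) ^ (j : ℕ))⁻¹) :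
    Multipliable (fun n : ℕ+ => (n : ℂ) ^ m / ((n : ℂ) ^ m - z ^ m)) ∧
      ∏' n : ℕ+, (n : ℂ) ^ m / ((n : ℂ) ^ m - z ^ m) =
        ∏ j ∈ Finset.range m,
          Complex.Gamma (1 - Complex.exp (2 * Real.pi * Complex.I / m) ^ j * z) := by
  have hm0 : m ≠ 0 := by omega
  set ω := Complex.exp (2 * Real.pi * Complex.I / m) with hωdef
  set F : ℕ+ → ℂ := fun n => (n : ℂ) ^ m / ((n : ℂ) ^ m - z ^ m) with hF
  by_cases hz0 : z = 0
  · subst hz0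
    have hF1 : F = fun _ => 1 := by
      funext n
      have hn : ((n : ℕ+) : ℂ) ≠ 0 := by
        exact_mod_cast Nat.cast_ne_zero.mpr n.ne_zero
      simp [hF, zero_pow hm0, div_self (pow_ne_zero m hn)]
    rw [hF1]
    refine ⟨multipliable_one, ?_⟩
    rw [tprod_one]
    symm
    apply Finset.prod_eq_one
    intro j _
    simp [Complex.Gamma_one]
  -- main case z ≠ 0
  have hωj0 : ∀ j : ℕ, (ω : ℂ) ^ j ≠ 0 := fun j => pow_ne_zero _ (Complex.exp_ne_zero _)
  have hden : ∀ (n : ℕ+) (j : ℕ), j < m → (n : ℂ) - ω ^ j * z ≠ 0 := by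
    intro n j hj h
    apply hz n ⟨j, hj⟩
    rw [sub_eq_zero] at h
    show z = (n : ℂ) * (ω ^ j)⁻¹
    rw [h, mul_comm (ω ^ j) z, mul_assoc, mul_inv_cancel₀ (hωj0 j), mul_one]
  have hfac : ∀ x : ℂ, x ^ m - z ^ m = ∏ j ∈ Finset.range m, (x - ω ^ j * z) :=
    fun x => aux_pow_sub_pow_prod m hm0 x z
  have hdne : ∀ n : ℕ+, (n : ℂ) ^ m - z ^ m ≠ 0 := by
    intro n
    rw [hfac]
    exact Finset.prod_ne_zero_iff.mpr fun j hj => hden n j (Finset.mem_range.mp hj)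
  have hn0 : ∀ n : ℕ+, ((n : ℕ+) : ℂ) ≠ 0 := by
    intro n
    exact_mod_cast Nat.cast_ne_zero.mpr n.ne_zero
  have hF0 : ∀ n : ℕ+, F n ≠ 0 := fun n => div_ne_zero (pow_ne_zero m (hn0 n)) (hdne n)
  -- Summability of logarithms, hence multipliability
  have hr : (0:ℝ) ≤ ‖z‖ ^ m := pow_nonneg (norm_nonneg z) m
  set r : ℝ := ‖z‖ ^ m with hrdef
  have hMul : Multipliable F := by
    have hsum2 : Summable (fun n : ℕ+ => 3 * r * (1 / ((n : ℕ) : ℝ) ^ 2)) := by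
      have h1 : Summable (fun n : ℕ => 3 * r * (1 / (n : ℝ) ^ 2)) :=
        ((Real.summable_one_div_nat_pow.mpr one_lt_two).mul_left (3 * r))
      exact h1.comp_injective PNat.coe_injective
    have hlog : Summable (fun n : ℕ+ => Complex.log (F n)) := by
      apply Summable.of_norm_bounded_eventually hsum2
      have hfin : {n : ℕ+ | ((n : ℕ) : ℝ) < 4 * r + 1}.Finite := by
        have hsub : {n : ℕ+ | ((n : ℕ) : ℝ) < 4 * r + 1} ⊆
            ((↑) : ℕ+ → ℕ) ⁻¹' (Set.Iio (Nat.ceil (4 * r + 1))) := by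
          intro n hn
          simp only [Set.mem_preimage, Set.mem_Iio]
          exact Nat.lt_ceil.mpr hn
        exact Set.Finite.subset ((Set.finite_Iio _).preimage
          (Set.injOn_of_injective PNat.coe_injective)) hsub
      rw [Filter.eventually_cofinite]
      apply Set.Finite.subset hfin
      intro n hn
      simp only [Set.mem_setOf_eq, not_le] at hn
      by_contra hbig
      simp only [Set.mem_setOf_eq, not_lt] at hbig
      apply absurd hn
      push_neg
      have hnm1 : (1:ℝ) ≤ ((n : ℕ) : ℝ) := by exact_mod_cast n.one_le
      have hpow_ge : ((n : ℕ) : ℝ) ≤ ((n : ℕ) : ℝ) ^ m := le_self_pow₀ hnm1 hm0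
      have h4r : 4 * r + 1 ≤ ((n : ℕ) : ℝ) ^ m := le_trans hbig hpow_ge
      have hnmpos : (0:ℝ) < ((n : ℕ) : ℝ) ^ m := by positivity
      have hnorm_den : ((n : ℕ) : ℝ) ^ m / 2 ≤ ‖(n : ℂ) ^ m - z ^ m‖ := by
        have h1 : ‖(n : ℂ) ^ m‖ - ‖z ^ m‖ ≤ ‖(n : ℂ) ^ m - z ^ m‖ :=
          norm_sub_norm_le _ _
        have h2 : ‖(n : ℂ) ^ m‖ = ((n : ℕ) : ℝ) ^ m := by
          rw [norm_pow]
          congr 1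
          rw [show ((n : ℕ+) : ℂ) = (((n : ℕ) : ℕ) : ℂ) from by norm_cast]
          simp [Complex.norm_natCast]
        have h3 : ‖z ^ m‖ = r := by rw [norm_pow]
        nlinarith
      have hd_norm : ‖z ^ m / ((n : ℂ) ^ m - z ^ m)‖ ≤ 2 * r / ((n : ℕ) : ℝ) ^ m := by
        rw [norm_div, norm_pow, ← hrdef]
        rw [div_le_div_iff₀ (lt_of_lt_of_le (by positivity) hnorm_den) (by positivity)]
        nlinarith [norm_nonneg ((n : ℂ) ^ m - z ^ m)]
      have hd_half : ‖z ^ m / ((n : ℂ) ^ m - z ^ m)‖ ≤ 1 / 2 := by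
        refine le_trans hd_norm ?_
        rw [div_le_div_iff₀ hnmpos (by norm_num)]
        nlinarith
      have hFn : F n = 1 + z ^ m / ((n : ℂ) ^ m - z ^ m) := by
        rw [hF]
        field_simp [hdne n]
        ring
      rw [hFn]
      calc ‖Complex.log (1 + z ^ m / ((n : ℂ) ^ m - z ^ m))‖
          ≤ 3 / 2 * ‖z ^ m / ((n : ℂ) ^ m - z ^ m)‖ :=
            Complex.norm_log_one_add_half_le_self hd_half
        _ ≤ 3 / 2 * (2 * r / ((n : ℕ) : ℝ) ^ m) := by
            apply mul_le_mul_of_nonneg_left hd_norm (by norm_num)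
        _ ≤ 3 * r * (1 / ((n : ℕ) : ℝ) ^ 2) := by
            have hpow22 : ((n : ℕ) : ℝ) ^ 2 ≤ ((n : ℕ) : ℝ) ^ m :=
              pow_le_pow_right₀ hnm1 hm
            have h2pos : (0:ℝ) < ((n : ℕ) : ℝ) ^ 2 := by positivity
            rw [show (3:ℝ) / 2 * (2 * r / ((n : ℕ) : ℝ) ^ m) = 3 * r / ((n : ℕ) : ℝ) ^ m
              from by ring, mul_one_div]
            gcongr
    exact Complex.multipliable_of_summable_log hlog
  refine ⟨hMul, ?_⟩
  -- now compute the value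
  set w : ℕ → ℂ := fun j => -(ω ^ j * z) with hwdef
  have hwne : ∀ j : ℕ, w j ≠ 0 := fun j => neg_ne_zero.mpr (mul_ne_zero (hωj0 j) hz0)
  set e : ℕ ≃ ℕ+ := Equiv.pnatEquivNat.symm with hedef
  have hei : ∀ i : ℕ, ((e i : ℕ+) : ℂ) = (i : ℂ) + 1 := by
    intro i
    have h1 : ((e i : ℕ+) : ℕ) = i + 1 := rfl
    rw [show ((e i : ℕ+) : ℂ) = (((e i : ℕ+) : ℕ) : ℂ) from by norm_cast, h1]
    push_cast
    ring
  have hkey : ∀ N : ℕ, 1 ≤ N → ∏ i ∈ Finset.range N, F (e i) =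
      ∏ j ∈ Finset.range m, (w j * Complex.GammaSeq (w j) N) := by
    intro N hN
    have hN0 : (N : ℂ) ≠ 0 := Nat.cast_ne_zero.mpr (by omega)
    have step1 : ∀ i ∈ Finset.range N, F (e i) =
        ∏ j ∈ Finset.range m, (((i : ℂ) + 1) / (((i : ℂ) + 1) + w j)) := by
      intro i _
      rw [hF]
      simp only
      rw [hei i, hfac ((i : ℂ) + 1), Finset.prod_div_distrib]
      rw [Finset.prod_const, Finset.card_range]
      congr 1
    rw [Finset.prod_congr rfl step1, Finset.prod_comm]
    have step3 : ∀ j ∈ Finset.range m,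
        ∏ i ∈ Finset.range N, (((i : ℂ) + 1) / (((i : ℂ) + 1) + w j)) =
          (w j * Complex.GammaSeq (w j) N) * (N : ℂ) ^ (-(w j)) :=
      fun j _ => aux_gs_eq (w j) (hwne j) N hN
    rw [Finset.prod_congr rfl step3, Finset.prod_mul_distrib]
    have step4 : ∏ j ∈ Finset.range m, (N : ℂ) ^ (-(w j)) = 1 := by
      have hc : ∀ j ∈ Finset.range m, (N : ℂ) ^ (-(w j)) =
          Complex.exp (Complex.log N * (-(w j))) :=
        fun j _ => by rw [Complex.cpow_def_of_ne_zero hN0]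
      rw [Finset.prod_congr rfl hc, ← Complex.exp_sum]
      have hs : ∀ j ∈ Finset.range m, Complex.log N * (-(w j)) =
          (Complex.log N * z) * ω ^ j := by
        intro j _
        simp only [hwdef]
        ring
      rw [Finset.sum_congr rfl hs, ← Finset.mul_sum, aux_sum_omega_pow m hm, mul_zero,
        Complex.exp_zero]
    rw [step4, mul_one]
  have hT2 : Filter.Tendsto (fun N => ∏ j ∈ Finset.range m, (w j * Complex.GammaSeq (w j) N))
      Filter.atTop (nhds (∏ j ∈ Finset.range m, Complex.Gamma (1 - ω ^ j * z))) := by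
    apply tendsto_finset_prod
    intro j _
    have h1 := (Complex.GammaSeq_tendsto_Gamma (w j)).const_mul (w j)
    have h2 : w j * Complex.Gamma (w j) = Complex.Gamma (1 - ω ^ j * z) := by
      rw [show (1:ℂ) - ω ^ j * z = w j + 1 from by simp only [hwdef]; ring,
        Complex.Gamma_add_one _ (hwne j)]
    rwa [h2] at h1
  have hT1 : Filter.Tendsto (fun N => ∏ i ∈ Finset.range N, F (e i))
      Filter.atTop (nhds (∏' n, F n)) :=
    ((Equiv.hasProd_iff e).mpr hMul.hasProd).tendsto_prod_nat
  have hT3 : Filter.Tendsto (fun N => ∏ i ∈ Finset.range N, F (e i))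
      Filter.atTop (nhds (∏ j ∈ Finset.range m, Complex.Gamma (1 - ω ^ j * z))) := by
    apply hT2.congr'
    filter_upwards [Filter.eventually_ge_atTop 1] with N hN
    exact (hkey N hN).symm
  exact tendsto_nhds_unique hT1 hT3
end

section
/- For every integer $m \geq 2$ and every complex $z$ with $|z| < 1$, $\prod_{j=0}^{m-1}\Gamma(1-\omega_m^j z) = \exp\left(\sum_{k=1}^{\infty}\frac{\zeta(mk)}{k} z^{mk}\right)$, where $\omega_m = e^{2\pi i/m}$. -/
open Finset Complex

lemma aux_roots_prod {m : ℕ} (hm : 2 ≤ m) (a b : ℂ) :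
    ∏ j ∈ Finset.range m, (a - Complex.exp (2 * Real.pi * Complex.I / m) ^ j * b)
      = a ^ m - b ^ m := by
  have hm0 : m ≠ 0 := by omega
  have h := Complex.isPrimitiveRoot_exp m hm0
  set ω := Complex.exp (2 * Real.pi * Complex.I / m)
  have himg : Polynomial.nthRootsFinset m (1 : ℂ) = (Finset.range m).image (ω ^ ·) := by
    refine (Finset.eq_of_subset_of_card_le ?_ ?_).symm
    · intro x hx
      simp only [Finset.mem_image, Finset.mem_range] at hx
      obtain ⟨j, hj, rfl⟩ := hx
      refine (Polynomial.mem_nthRootsFinset (by omega) 1).2 ?_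
      rw [← pow_mul, mul_comm, pow_mul, h.pow_eq_one, one_pow]
    · rw [h.card_nthRootsFinset, Finset.card_image_of_injOn
        fun i hi j hj hij => h.pow_inj (mem_range.1 hi) (mem_range.1 hj) hij]
      simp
  have key := h.pow_sub_pow_eq_prod_sub_mul (x := a) (y := b) (by omega : 0 < m)
  rw [key, himg,
    Finset.prod_image fun i hi j hj hij => h.pow_inj (mem_range.1 hi) (mem_range.1 hj) hij]

lemma aux_hasSum {m : ℕ} (hm : 2 ≤ m) {w : ℂ} (hw : ‖w‖ < 1) :
    HasSum (fun i : ℕ => -Complex.log (1 - w / ((i : ℂ) + 1) ^ m))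
      (∑' k : ℕ+, riemannZeta (m * k) / (k : ℂ) * w ^ (k : ℕ)) := by
  set u : ℕ → ℂ := fun i => w / ((i : ℂ) + 1) ^ m with hu
  set G : ℕ × ℕ → ℂ := fun p => u p.1 ^ (p.2 + 1) / ((p.2 : ℂ) + 1) with hG
  have hipow : ∀ (i : ℕ) (N : ℕ), (1 : ℝ) ≤ ((i : ℝ) + 1) ^ N := fun i N =>
    one_le_pow₀ (le_add_of_nonneg_left (Nat.cast_nonneg i))
  have hb : ∀ i : ℕ, ‖((i : ℂ) + 1)‖ = ((i : ℝ) + 1) := by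
    intro i
    rw [show ((i : ℂ) + 1) = ((i + 1 : ℕ) : ℂ) by push_cast; ring, Complex.norm_natCast]
    push_cast; ring
  have hnc : ∀ i N : ℕ, ‖((i : ℂ) + 1) ^ N‖ = ((i : ℝ) + 1) ^ N := by
    intro i N
    rw [norm_pow, show ((i : ℂ) + 1) = ((i + 1 : ℕ) : ℂ) by push_cast; ring,
      Complex.norm_natCast]
    push_cast; ring
  have hine : ∀ (i N : ℕ), ((i : ℂ) + 1) ^ N ≠ 0 := fun i N =>
    pow_ne_zero N (Nat.cast_add_one_ne_zero i)
  have hnorm_u : ∀ i, ‖u i‖ ≤ ‖w‖ := by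
    intro i
    rw [hu, norm_div, hnc i m]
    calc ‖w‖ / ((i : ℝ) + 1) ^ m ≤ ‖w‖ / 1 :=
          div_le_div_of_nonneg_left (norm_nonneg w) one_pos (hipow i m)
      _ = ‖w‖ := div_one _
  have hui : ∀ i, ‖u i‖ < 1 := fun i => lt_of_le_of_lt (hnorm_u i) hw
  -- row sums
  have hrow : ∀ i, HasSum (fun k => G (i, k)) (-Complex.log (1 - u i)) := by
    intro i
    have h0 := Complex.hasSum_taylorSeries_neg_log (hui i)
    have h1 := (hasSum_nat_add_iff' (f := fun n : ℕ => u i ^ n / n) 1).2 h0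
    simp only [Finset.range_one, Finset.sum_singleton, Nat.cast_zero, pow_zero,
      div_zero, sub_zero] at h1
    convert h1 using 2 with k
    · rfl
    push_cast [hG]
    ring
  -- column sums
  have hcol : ∀ k : ℕ, HasSum (fun i => G (i, k))
      (riemannZeta (m * (k + 1)) / ((k : ℂ) + 1) * w ^ (k + 1)) := by
    intro k
    have hN : 1 < m * (k + 1) := by nlinarith
    have hsum : Summable (fun i : ℕ => 1 / ((i : ℂ) + 1) ^ (m * (k + 1))) := by
      apply Summable.of_norm
      have : Summable (fun i : ℕ => 1 / ((i : ℝ) + 1) ^ 2) := by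
        have := (summable_nat_add_iff 1).2 (Real.summable_one_div_nat_pow.2 one_lt_two)
        refine this.congr fun i => by push_cast; ring
      refine Summable.of_nonneg_of_le (fun i => by positivity) (fun i => ?_) this
      rw [norm_div, norm_one, hnc]
      refine div_le_div_of_nonneg_left one_pos.le (by positivity) ?_
      exact pow_le_pow_right₀ (le_add_of_nonneg_left (Nat.cast_nonneg i)) (by nlinarith)
    have hζ : riemannZeta (m * (k + 1) : ℕ) = ∑' i : ℕ, 1 / ((i : ℂ) + 1) ^ (m * (k + 1)) := by
      rw [zeta_eq_tsum_one_div_nat_add_one_cpow (by simp; exact_mod_cast hN)]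
      congr 1; funext i
      rw [show ((i : ℂ) + 1) = ((i + 1 : ℕ) : ℂ) by push_cast; ring, ← Complex.cpow_natCast]
    have h2 : HasSum (fun i : ℕ => 1 / ((i : ℂ) + 1) ^ (m * (k + 1)))
        (riemannZeta (m * (k + 1) : ℕ)) := hζ ▸ hsum.hasSum
    have h3 := h2.mul_left (w ^ (k + 1) / ((k : ℂ) + 1))
    convert h3 using 1
    · rfl
    · funext i
      simp only [hG, hu, div_pow, ← pow_mul]
      rw [div_div, mul_one_div, div_div]
      ring_nf
    · push_cast
      ring
  -- summability of G
  have hGs : Summable G := by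
    apply Summable.of_norm
    have h1 : Summable (fun i : ℕ => 1 / ((i : ℝ) + 1) ^ 2) := by
      have := (summable_nat_add_iff 1).2 (Real.summable_one_div_nat_pow.2 one_lt_two)
      exact this.congr fun i => by push_cast; ring
    have h2 : Summable (fun k : ℕ => ‖w‖ ^ (k + 1)) := by
      have := (summable_geometric_of_lt_one (norm_nonneg w) hw).mul_left ‖w‖
      exact this.congr fun k => by rw [← pow_succ']
    have hmaj := h1.mul_of_nonneg h2 (fun i => by positivity) (fun k => by positivity)
    refine Summable.of_nonneg_of_le (fun p => norm_nonneg _) (fun p => ?_) hmaj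
    obtain ⟨i, k⟩ := p
    have e1 : ‖((k : ℂ) + 1)‖ = (k : ℝ) + 1 := by
      rw [show ((k : ℂ) + 1) = ((k + 1 : ℕ) : ℂ) by push_cast; ring, Complex.norm_natCast]
      push_cast; ring
    calc ‖G (i, k)‖ ≤ ‖u i ^ (k + 1)‖ := by
          rw [hG, norm_div, e1]
          exact div_le_self (by positivity) (le_add_of_nonneg_left (Nat.cast_nonneg k))
      _ = ‖w‖ ^ (k + 1) / ((i : ℝ) + 1) ^ (m * (k + 1)) := by
          simp only [norm_pow, hu, norm_div, hnc i m, hb i, div_pow, ← pow_mul]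
      _ ≤ ‖w‖ ^ (k + 1) / ((i : ℝ) + 1) ^ 2 := by
          apply div_le_div_of_nonneg_left (by positivity) (by positivity)
          exact pow_le_pow_right₀ (le_add_of_nonneg_left (Nat.cast_nonneg i)) (by nlinarith)
      _ = 1 / ((i : ℝ) + 1) ^ 2 * ‖w‖ ^ (k + 1) := by ring
  -- assembly
  have hT := hGs.hasSum.prod_fiberwise hrow
  have hGs2 : HasSum (fun p : ℕ × ℕ => G (p.2, p.1)) (∑' p, G p) :=
    (Equiv.prodComm ℕ ℕ).hasSum_iff.2 hGs.hasSum
  have hT2 := hGs2.prod_fiberwise hcol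
  have hgoal : (∑' k : ℕ+, riemannZeta (m * k) / (k : ℂ) * w ^ (k : ℕ)) = ∑' p, G p := by
    rw [← Equiv.tsum_eq Equiv.pnatEquivNat.symm
      (fun k : ℕ+ => riemannZeta (m * k) / (k : ℂ) * w ^ (k : ℕ)), ← hT2.tsum_eq]
    apply tsum_congr
    intro k
    have h1 : ((Equiv.pnatEquivNat.symm k : ℕ+) : ℕ) = k + 1 := rfl
    push_cast [h1]
    ring_nf
  rw [hgoal]
  exact hT

theorem stmt_4 (m : ℕ) (hm : 2 ≤ m) (z : ℂ) (hz : ‖z‖ < 1) :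
    ∏ j ∈ Finset.range m,
        Complex.Gamma (1 - Complex.exp (2 * Real.pi * Complex.I / m) ^ j * z) =
      Complex.exp (∑' k : ℕ+, riemannZeta (m * k) / (k : ℂ) * z ^ (m * (k : ℕ))) := by
  set ω := Complex.exp (2 * Real.pi * Complex.I / m) with hω
  set w := z ^ m with hwdef
  have hw : ‖w‖ < 1 := by
    rw [hwdef, norm_pow]
    exact pow_lt_one₀ (norm_nonneg z) hz (by omega)
  have hsum_eq : (∑' k : ℕ+, riemannZeta (m * k) / (k : ℂ) * z ^ (m * (k : ℕ)))
      = ∑' k : ℕ+, riemannZeta (m * k) / (k : ℂ) * w ^ (k : ℕ) := by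
    apply tsum_congr; intro k; rw [hwdef, ← pow_mul]
  rw [hsum_eq]
  set S := ∑' k : ℕ+, riemannZeta (m * k) / (k : ℂ) * w ^ (k : ℕ) with hS
  have hroot := Complex.isPrimitiveRoot_exp m (by omega : m ≠ 0)
  set u : ℕ → ℂ := fun i => w / ((i : ℂ) + 1) ^ m with hu
  have hine : ∀ (i N : ℕ), ((i : ℂ) + 1) ^ N ≠ 0 := fun i N =>
    pow_ne_zero N (Nat.cast_add_one_ne_zero i)
  have hone_sub_ne : ∀ i, (1 : ℂ) - u i ≠ 0 := by
    intro i h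
    have : u i = 1 := by linear_combination -h
    have h2 : ‖u i‖ ≤ ‖w‖ := by
      rw [hu, norm_div]
      calc ‖w‖ / ‖((i : ℂ) + 1) ^ m‖ ≤ ‖w‖ / 1 := by
            apply div_le_div_of_nonneg_left (norm_nonneg w) one_pos
            rw [norm_pow, show ((i : ℂ) + 1) = ((i + 1 : ℕ) : ℂ) by push_cast; ring,
              Complex.norm_natCast]
            exact_mod_cast Nat.one_le_iff_ne_zero.2 (by positivity)
        _ = ‖w‖ := div_one _
    rw [this] at h2
    simp at h2
    exact absurd (lt_of_le_of_lt h2 hw) (by norm_num)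
  -- limit of product of GammaSeq
  have hA : Filter.Tendsto (fun n => ∏ j ∈ Finset.range m, Complex.GammaSeq (1 - ω ^ j * z) n)
      Filter.atTop (nhds (∏ j ∈ Finset.range m, Complex.Gamma (1 - ω ^ j * z))) :=
    tendsto_finset_prod _ fun j _ => Complex.GammaSeq_tendsto_Gamma _
  -- the alternative sequence
  set F : ℕ → ℂ := fun n =>
    ((n : ℂ) / ((n : ℂ) + 1)) ^ m *
      Complex.exp (∑ i ∈ Finset.range (n + 1), -Complex.log (1 - u i)) with hF
  have hB : Filter.Tendsto F Filter.atTop (nhds (1 ^ m * Complex.exp S)) := by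
    apply Filter.Tendsto.mul
    · exact (tendsto_natCast_div_add_atTop (1 : ℂ)).pow m
    · have t2 := (aux_hasSum hm hw).tendsto_sum_nat
      rw [← hS] at t2
      exact (Complex.continuous_exp.tendsto S).comp (t2.comp (Filter.tendsto_add_atTop_nat 1))
  rw [one_pow, one_mul] at hB
  -- eventual equality
  have hE : ∀ n : ℕ, 1 ≤ n →
      ∏ j ∈ Finset.range m, Complex.GammaSeq (1 - ω ^ j * z) n = F n := by
    intro n hn
    have hn0 : (n : ℂ) ≠ 0 := Nat.cast_ne_zero.2 (by omega)
    have hsum_s : ∑ j ∈ Finset.range m, (1 - ω ^ j * z) = (m : ℂ) := by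
      have hgeom : ∑ j ∈ Finset.range m, ω ^ j = 0 := by
        rw [geom_sum_eq (hroot.ne_one hm), hroot.pow_eq_one]
        simp
      rw [Finset.sum_sub_distrib, ← Finset.sum_mul, hgeom, Finset.sum_const]
      simp
    have hcpow : ∏ j ∈ Finset.range m, (n : ℂ) ^ (1 - ω ^ j * z) = (n : ℂ) ^ m := by
      simp_rw [Complex.cpow_def_of_ne_zero hn0]
      rw [← Complex.exp_sum, ← Finset.mul_sum, hsum_s, ← Complex.cpow_def_of_ne_zero hn0,
        Complex.cpow_natCast]
    have hden : ∀ i : ℕ, ∏ j ∈ Finset.range m, ((1 - ω ^ j * z) + (i : ℂ))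
        = ((i : ℂ) + 1) ^ m - w := by
      intro i
      rw [show ((i : ℂ) + 1) ^ m - w = ((i : ℂ) + 1) ^ m - z ^ m from by rw [hwdef],
        ← aux_roots_prod hm ((i : ℂ) + 1) z]
      apply Finset.prod_congr rfl
      intro j _
      ring
    calc ∏ j ∈ Finset.range m, Complex.GammaSeq (1 - ω ^ j * z) n
        = ((n : ℂ) ^ m * ((Nat.factorial n : ℕ) : ℂ) ^ m) /
            ∏ i ∈ Finset.range (n + 1), (((i : ℂ) + 1) ^ m - w) := by
          unfold Complex.GammaSeq
          rw [Finset.prod_div_distrib, Finset.prod_mul_distrib, hcpow, Finset.prod_const,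
            Finset.prod_comm]
          congr 1
          · rw [Finset.card_range]
          · exact Finset.prod_congr rfl fun i _ => hden i
      _ = F n := by
          have hfacC : ∏ i ∈ Finset.range (n + 1), ((i : ℂ) + 1)
              = ((Nat.factorial (n + 1) : ℕ) : ℂ) := by
            rw [← Finset.prod_range_add_one_eq_factorial (n + 1)]
            push_cast
            rfl
          have hfac : ∏ i ∈ Finset.range (n + 1), (((i : ℂ) + 1) ^ m - w)
              = ((Nat.factorial (n + 1) : ℕ) : ℂ) ^ m *
                  ∏ i ∈ Finset.range (n + 1), (1 - u i) := by
            have h1 : ∀ i : ℕ, ((i : ℂ) + 1) ^ m - w = ((i : ℂ) + 1) ^ m * (1 - u i) := by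
              intro i
              rw [hu]
              simp only []
              rw [mul_sub, mul_one, mul_div_cancel₀ _ (hine i m)]
            rw [Finset.prod_congr rfl fun i _ => h1 i, Finset.prod_mul_distrib,
              Finset.prod_pow, hfacC]
          have hexp : Complex.exp (∑ i ∈ Finset.range (n + 1), -Complex.log (1 - u i))
              = (∏ i ∈ Finset.range (n + 1), (1 - u i))⁻¹ := by
            rw [Complex.exp_sum, ← Finset.prod_inv_distrib]
            refine Finset.prod_congr rfl fun i _ => ?_
            rw [Complex.exp_neg, Complex.exp_log (hone_sub_ne i)]
          rw [hfac]
          simp only [hF]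
          rw [hexp]
          have hprod_ne : ∏ i ∈ Finset.range (n + 1), (1 - u i) ≠ 0 :=
            Finset.prod_ne_zero_iff.2 fun i _ => hone_sub_ne i
          have hfact_ne : ((Nat.factorial n : ℕ) : ℂ) ≠ 0 :=
            Nat.cast_ne_zero.2 (Nat.factorial_ne_zero n)
          have hn1 : ((n : ℂ) + 1) ≠ 0 := Nat.cast_add_one_ne_zero n
          have hfs : ((Nat.factorial (n + 1) : ℕ) : ℂ) = ((n : ℂ) + 1) * (Nat.factorial n : ℕ) := by
            rw [Nat.factorial_succ]
            push_cast
            ring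
          rw [hfs]
          generalize hP : ∏ i ∈ Finset.range (n + 1), (1 - u i) = P at hprod_ne ⊢
          field_simp
          rw [mul_pow]
          rw [div_pow]
          field_simp
  have hEq : Filter.Tendsto (fun n => ∏ j ∈ Finset.range m, Complex.GammaSeq (1 - ω ^ j * z) n)
      Filter.atTop (nhds (Complex.exp S)) :=
    hB.congr' (by filter_upwards [Filter.eventually_ge_atTop 1] with n hn using (hE n hn).symm)
  exact tendsto_nhds_unique hA hEq
end

section
/- For every positive integer $n$, $\prod_{s=1, s\neq n}^{\infty} \frac{s^2}{s^2 - n^2} = 2(-1)^{n-1}$. -/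
open Finset Filter Real Topology

private lemma prodLA (c : ℕ) : ∀ m : ℕ,
    ∏ i ∈ Finset.range m, ((c : ℝ) + 1 + i) = (c + m).factorial / c.factorial := by
  intro m
  induction m with
  | zero =>
      have hc : (c.factorial : ℝ) ≠ 0 := by positivity
      simp [div_self hc]
  | succ m ih =>
      rw [Finset.prod_range_succ, ih, show c + (m + 1) = (c + m) + 1 from rfl,
        Nat.factorial_succ]
      have hc : (c.factorial : ℝ) ≠ 0 := by positivity
      field_simp
      push_cast
      ring

private lemma prodLB : ∀ (m c : ℕ), m ≤ c →
    ∏ i ∈ Finset.range m, ((c : ℝ) - i) = c.factorial / (c - m).factorial := by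
  intro m
  induction m with
  | zero =>
      intro c _
      have hc : (c.factorial : ℝ) ≠ 0 := by positivity
      simp [div_self hc]
  | succ m ih =>
      intro c hc
      have hm : m ≤ c := le_of_lt (Nat.lt_of_succ_le hc)
      rw [Finset.prod_range_succ, ih c hm]
      have h1 : c - m = (c - (m + 1)) + 1 := by omega
      rw [h1, Nat.factorial_succ]
      have h2 : ((c - (m + 1) : ℕ) : ℝ) = (c : ℝ) - ((m : ℝ) + 1) := by
        push_cast [Nat.cast_sub hc]; ring
      have h3 : ((c - (m+1)).factorial : ℝ) ≠ 0 := by positivity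
      have h4 : (c : ℝ) - ((m : ℝ) + 1) + 1 ≠ 0 := by
        have : (m : ℝ) + 1 ≤ (c : ℝ) := by exact_mod_cast hc
        intro hcon; linarith
      push_cast
      rw [h2]
      field_simp
      ring

theorem stmt_9 (n : ℕ+) :
    ∏' s : {s : ℕ+ // s ≠ n}, ((s : ℝ) ^ 2 / ((s : ℝ) ^ 2 - (n : ℝ) ^ 2)) =
      2 * (-1) ^ ((n : ℕ) - 1) := by
  set N : ℕ := (n : ℕ) with hNdef
  have hN1 : 1 ≤ N := n.one_le
  set L : ℝ := 2 * (-1) ^ (N - 1) with hLdef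
  set g : ℕ → ℝ := fun k => if k + 1 = N then 1
    else ((k : ℝ) + 1) ^ 2 / (((k : ℝ) + 1) ^ 2 - (N : ℝ) ^ 2) with hgdef
  have hgif : ∀ k : ℕ, g k = if k + 1 = N then 1
      else ((k : ℝ) + 1) ^ 2 / (((k : ℝ) + 1) ^ 2 - (N : ℝ) ^ 2) := fun k => rfl
  have hnR : ((N : ℝ)) = (n : ℝ) := by norm_cast
  -- Step 1 : reduce to `∏' k, g k`
  have hred : ∏' s : {s : ℕ+ // s ≠ n}, ((s : ℝ) ^ 2 / ((s : ℝ) ^ 2 - (n : ℝ) ^ 2))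
      = ∏' k : ℕ, g k := by
    have h1 : ∏' s : {s : ℕ+ // s ≠ n}, ((s : ℝ) ^ 2 / ((s : ℝ) ^ 2 - (n : ℝ) ^ 2))
        = ∏' s : ℕ+, Set.mulIndicator {s : ℕ+ | s ≠ n}
          (fun s : ℕ+ => ((s : ℝ) ^ 2 / ((s : ℝ) ^ 2 - (n : ℝ) ^ 2))) s :=
      _root_.tprod_subtype {s : ℕ+ | s ≠ n}
        (fun s : ℕ+ => ((s : ℝ) ^ 2 / ((s : ℝ) ^ 2 - (n : ℝ) ^ 2)))
    rw [h1, ← Equiv.tprod_eq Equiv.pnatEquivNat.symm]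
    refine tprod_congr fun k => ?_
    have hse : (Equiv.pnatEquivNat.symm k : ℕ+) = k.succPNat := rfl
    have hsc : ((k.succPNat : ℕ+) : ℝ) = (k : ℝ) + 1 := by
      simp [Nat.succPNat]
    rw [hse]
    by_cases hk : k + 1 = N
    · have hmem : k.succPNat = n := by
        apply PNat.coe_injective; simpa [Nat.succPNat] using hk
      rw [Set.mulIndicator_apply, if_neg (by simp [hmem]), hgif]
      simp [hk]
    · have hmem : k.succPNat ≠ n := by
        intro h
        exact hk (by simpa [Nat.succPNat] using congrArg (PNat.val) h)
      rw [Set.mulIndicator_apply, if_pos (by simpa using hmem), hgif]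
      simp only [hsc, hnR]
      rw [if_neg hk]
  rw [hred]
  clear_value g
  clear hgdef
  clear_value L
  clear hred hnR
  clear_value N
  clear hNdef
  -- Step 2: Multipliability of g
  have hgt : ∀ k : ℕ, g (k + N) = ((k : ℝ) + N + 1) ^ 2 / (((k : ℝ) + N + 1) ^ 2 - (N : ℝ) ^ 2) := by
    intro k
    rw [hgif (k + N), if_neg (by omega)]
    push_cast
    ring_nf
  have hdpos : ∀ k : ℕ, (0 : ℝ) < ((k : ℝ) + N + 1) ^ 2 - (N : ℝ) ^ 2 := by
    intro k
    have h0 : (0:ℝ) ≤ (k:ℝ) := Nat.cast_nonneg k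
    have h1 : (0:ℝ) ≤ (N:ℝ) := Nat.cast_nonneg N
    nlinarith
  have htpos : ∀ k : ℕ, (0 : ℝ) < g (k + N) := by
    intro k; rw [hgt k]
    exact div_pos (by positivity) (hdpos k)
  have htge1 : ∀ k : ℕ, (1 : ℝ) ≤ g (k + N) := by
    intro k; rw [hgt k]
    rw [le_div_iff₀ (hdpos k)]
    have h1 : (0:ℝ) ≤ (N:ℝ) := Nat.cast_nonneg N
    nlinarith
  have hlog : Summable fun k : ℕ => Real.log (g (k + N)) := by
    have hmaj : Summable fun k : ℕ => (N : ℝ) ^ 2 / ((k : ℝ) + 1) ^ 2 := by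
      have h0 : Summable fun k : ℕ => 1 / ((k : ℝ)) ^ 2 :=
        Real.summable_one_div_nat_pow.mpr one_lt_two
      have h1 : Summable fun k : ℕ => 1 / ((k : ℝ) + 1) ^ 2 := by
        have h2 := (summable_nat_add_iff 1).mpr h0
        refine h2.congr fun k => ?_
        push_cast
        ring
      have h2 := h1.mul_left ((N : ℝ) ^ 2)
      refine h2.congr fun k => ?_
      ring
    refine Summable.of_nonneg_of_le (fun k => Real.log_nonneg (htge1 k)) (fun k => ?_) hmaj
    have hle : Real.log (g (k + N)) ≤ g (k + N) - 1 :=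
      Real.log_le_sub_one_of_pos (htpos k)
    have heq : g (k + N) - 1 = (N : ℝ) ^ 2 / (((k : ℝ) + N + 1) ^ 2 - (N : ℝ) ^ 2) := by
      rw [hgt k]
      have hd : ((k : ℝ) + N + 1) ^ 2 - (N : ℝ) ^ 2 ≠ 0 := ne_of_gt (hdpos k)
      field_simp [hd]
      ring
    have hden : ((k : ℝ) + 1) ^ 2 ≤ ((k : ℝ) + N + 1) ^ 2 - (N : ℝ) ^ 2 := by
      have h0 : (0:ℝ) ≤ (k:ℝ) := Nat.cast_nonneg k
      have h1 : (1:ℝ) ≤ (N:ℝ) := by exact_mod_cast hN1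
      nlinarith
    have hstep : (N : ℝ) ^ 2 / (((k : ℝ) + N + 1) ^ 2 - (N : ℝ) ^ 2)
        ≤ (N : ℝ) ^ 2 / ((k : ℝ) + 1) ^ 2 := by
      apply div_le_div_of_nonneg_left _ (by positivity) hden
      positivity
    calc Real.log (g (k + N)) ≤ g (k + N) - 1 := hle
      _ = (N : ℝ) ^ 2 / (((k : ℝ) + N + 1) ^ 2 - (N : ℝ) ^ 2) := heq
      _ ≤ (N : ℝ) ^ 2 / ((k : ℝ) + 1) ^ 2 := hstep
  have hmultT : Multipliable fun k : ℕ => g (k + N) := by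
    have hp := hlog.hasSum.rexp
    have hfe : (Real.exp ∘ fun k : ℕ => Real.log (g (k + N))) = fun k : ℕ => g (k + N) :=
      funext fun k => Real.exp_log (htpos k)
    rw [hfe] at hp
    exact ⟨_, hp⟩
  have hmult : Multipliable g := Multipliable.comp_nat_add hmultT
  -- Step 3: partial product formula
  have hfacpos : ∀ m : ℕ, (0 : ℝ) < (m.factorial : ℝ) := fun m => by
    exact_mod_cast m.factorial_pos
  have key : ∀ m : ℕ, ∏ i ∈ Finset.range (N + m), g i
      = L * (((N + m).factorial : ℝ) ^ 2 / ((m.factorial : ℝ) * ((2 * N + m).factorial : ℝ))) := by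
    intro m
    induction m with
    | zero =>
        obtain ⟨p, hp⟩ := Nat.exists_eq_succ_of_ne_zero (by omega : N ≠ 0)
        have hbody : ∀ i ∈ Finset.range p, g i =
            (((i:ℝ)+1) * ((i:ℝ)+1)) / ((((i:ℝ)+1) - N) * (((i:ℝ)+1) + N)) := by
          intro i hi
          have hi' : i < p := Finset.mem_range.mp hi
          rw [hgif i, if_neg (by omega)]
          ring_nf
        have hsplit : ∏ i ∈ Finset.range (N + 0), g i
            = (∏ i ∈ Finset.range p, g i) * g p := by
          rw [show N + 0 = p + 1 by omega, Finset.prod_range_succ]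
        have hgp : g p = 1 := by rw [hgif p, if_pos (by omega)]
        rw [hsplit, hgp, mul_one, Finset.prod_congr rfl hbody]
        rw [Finset.prod_div_distrib, Finset.prod_mul_distrib, Finset.prod_mul_distrib]
        have e1 : ∏ i ∈ Finset.range p, ((i:ℝ) + 1) = (p.factorial : ℝ) := by
          have h := Finset.prod_range_add_one_eq_factorial p
          exact_mod_cast congrArg (Nat.cast : ℕ → ℝ) h
        have e2 : ∏ i ∈ Finset.range p, (((i:ℝ) + 1) - N) = (-1 : ℝ) ^ p * (p.factorial : ℝ) := by
          have h1 : ∀ i ∈ Finset.range p, ((i:ℝ) + 1) - N = (-1) * ((p : ℝ) - i) := by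
            intro i _
            have hc : (N : ℝ) = (p : ℝ) + 1 := by
              rw [hp]; push_cast; ring
            rw [hc]; ring
          rw [Finset.prod_congr rfl h1, Finset.prod_mul_distrib, Finset.prod_const,
            prodLB p p le_rfl]
          simp
        have e3 : ∏ i ∈ Finset.range p, (((i:ℝ) + 1) + N)
            = ((N + p).factorial : ℝ) / (N.factorial : ℝ) := by
          have h1 : ∀ i ∈ Finset.range p, ((i:ℝ) + 1) + N = (N : ℝ) + 1 + i := by
            intro i _; ring
          rw [Finset.prod_congr rfl h1, prodLA N p]
        rw [e1, e2, e3]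
        have hfacN : (N.factorial : ℝ) ≠ 0 := ne_of_gt (hfacpos N)
        have hfacp : (p.factorial : ℝ) ≠ 0 := ne_of_gt (hfacpos p)
        have hfacNp : (((N + p).factorial : ℝ)) ≠ 0 := ne_of_gt (hfacpos _)
        have hid1 : (N.factorial : ℝ) = (N : ℝ) * (p.factorial : ℝ) := by
          rw [hp, Nat.factorial_succ]; push_cast [hp]; ring
        have hid2 : ((2 * N + 0).factorial : ℝ) = (2 * (N:ℝ)) * ((N + p).factorial : ℝ) := by
          have h2 : 2 * N + 0 = (N + p) + 1 := by omega
          rw [h2, Nat.factorial_succ]; push_cast [hp]; ring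
        have hLp : L = 2 * (-1 : ℝ) ^ p := by
          rw [hLdef, show N - 1 = p by omega]
        rw [hid2, hLp, show N + 0 = N from rfl, hid1]
        have hNne : (N : ℝ) ≠ 0 := by positivity
        have hsq : ((-1 : ℝ) ^ p) * ((-1 : ℝ) ^ p) = 1 := by
          rw [← pow_add, ← two_mul, pow_mul]; norm_num
        field_simp
        linear_combination (-1 : ℝ) * hsq
    | succ m ih =>
        rw [show N + (m + 1) = (N + m) + 1 from rfl, Finset.prod_range_succ, ih]
        have hgNm : g (N + m) = ((N:ℝ) + m + 1) ^ 2 / (((N:ℝ) + m + 1) ^ 2 - (N:ℝ) ^ 2) := by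
          rw [hgif (N + m), if_neg (by omega)]
          push_cast; ring_nf
        rw [hgNm]
        have f1 : (((N + m) + 1).factorial : ℝ) = ((N:ℝ) + m + 1) * ((N + m).factorial : ℝ) := by
          rw [Nat.factorial_succ]; push_cast; ring
        have f2 : ((m + 1).factorial : ℝ) = ((m:ℝ) + 1) * (m.factorial : ℝ) := by
          rw [Nat.factorial_succ]; push_cast; ring
        have f3 : ((2 * N + (m + 1)).factorial : ℝ)
            = (2 * (N:ℝ) + m + 1) * ((2 * N + m).factorial : ℝ) := by
          rw [show 2 * N + (m + 1) = (2 * N + m) + 1 from rfl, Nat.factorial_succ]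
          push_cast; ring
        have hdne : ((N:ℝ) + m + 1) ^ 2 - (N:ℝ) ^ 2 = ((m:ℝ) + 1) * (2 * (N:ℝ) + m + 1) := by
          ring
        rw [f1, f2, f3, hdne]
        have h1 : (((N + m).factorial : ℝ)) ≠ 0 := ne_of_gt (hfacpos _)
        have h2 : ((m.factorial : ℝ)) ≠ 0 := ne_of_gt (hfacpos _)
        have h3 : (((2 * N + m).factorial : ℝ)) ≠ 0 := ne_of_gt (hfacpos _)
        have h4 : ((m:ℝ) + 1) ≠ 0 := by positivity
        have h5 : (2 * (N:ℝ) + m + 1) ≠ 0 := by positivity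
        field_simp
  -- Step 4: the ratio of factorials tends to 1
  have hT1 : Tendsto (fun m : ℕ =>
      ((N + m).factorial : ℝ) ^ 2 / ((m.factorial : ℝ) * ((2 * N + m).factorial : ℝ)))
      atTop (𝓝 1) := by
    have heq : ∀ m : ℕ, ((N + m).factorial : ℝ) ^ 2 / ((m.factorial : ℝ) * ((2 * N + m).factorial : ℝ))
        = ∏ j ∈ Finset.range N, (1 - (N : ℝ) / ((m : ℝ) + (2 * (N:ℝ) - j))) := by
      intro m
      have hbody : ∀ j ∈ Finset.range N, 1 - (N : ℝ) / ((m : ℝ) + (2 * (N:ℝ) - j))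
          = (((N + m : ℕ) : ℝ) - j) / (((2 * N + m : ℕ) : ℝ) - j) := by
        intro j hj
        have hj' : j < N := Finset.mem_range.mp hj
        have hjR : (j : ℝ) < N := by exact_mod_cast hj'
        have ha : (((N + m : ℕ) : ℝ)) = (N : ℝ) + m := by push_cast; ring
        have hb : (((2 * N + m : ℕ) : ℝ)) = 2 * (N : ℝ) + m := by push_cast; ring
        have hden : ((m : ℝ) + (2 * (N:ℝ) - j)) ≠ 0 := by
          have h0 : (0:ℝ) ≤ (m:ℝ) := Nat.cast_nonneg m
          nlinarith
        have hden' : (2 * (N : ℝ) + m - j) ≠ 0 := by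
          intro hcon; apply hden; linarith
        rw [ha, hb]
        rw [show (m : ℝ) + (2 * (N:ℝ) - j) = 2 * (N : ℝ) + m - j by ring]
        rw [eq_div_iff hden', sub_mul, div_mul_cancel₀ _ hden']
        ring
      rw [Finset.prod_congr rfl hbody, Finset.prod_div_distrib]
      rw [prodLB N (N + m) (by omega), prodLB N (2 * N + m) (by omega)]
      rw [show N + m - N = m by omega, show 2 * N + m - N = N + m by omega]
      have h1 : (((N + m).factorial : ℝ)) ≠ 0 := ne_of_gt (hfacpos _)
      have h2 : ((m.factorial : ℝ)) ≠ 0 := ne_of_gt (hfacpos _)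
      have h3 : (((2 * N + m).factorial : ℝ)) ≠ 0 := ne_of_gt (hfacpos _)
      field_simp
    rw [funext heq]
    have hfin := tendsto_finset_prod (f := fun (j : ℕ) (m : ℕ) =>
        (1 - (N : ℝ) / ((m : ℝ) + (2 * (N:ℝ) - j)))) (x := atTop)
        (a := fun _ => (1:ℝ)) (Finset.range N) ?_
    · simpa using hfin
    · intro j _
      have hden : Tendsto (fun m : ℕ => (m : ℝ) + (2 * (N:ℝ) - j)) atTop atTop :=
        tendsto_atTop_add_const_right _ _ tendsto_natCast_atTop_atTop
      have h0 : Tendsto (fun m : ℕ => (N : ℝ) / ((m : ℝ) + (2 * (N:ℝ) - j))) atTop (𝓝 0) :=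
        Tendsto.div_atTop tendsto_const_nhds hden
      simpa using tendsto_const_nhds.sub h0
  -- Step 5: conclude
  have hTL : Tendsto (fun m : ℕ => ∏ i ∈ Finset.range m, g i) atTop (𝓝 L) := by
    rw [← tendsto_add_atTop_iff_nat N]
    have hc : ∀ m : ℕ, ∏ i ∈ Finset.range (m + N), g i
        = L * (((N + m).factorial : ℝ) ^ 2 / ((m.factorial : ℝ) * ((2 * N + m).factorial : ℝ))) := by
      intro m
      rw [show m + N = N + m by omega]
      exact key m
    rw [funext hc]
    simpa using tendsto_const_nhds.mul hT1
  have hTtprod := hmult.hasProd.tendsto_prod_nat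
  exact tendsto_nhds_unique hTtprod hTL
end

section
/- For all complex $z$ not equal to a nonzero integer, $\pi z \csc(\pi z) = 1 + \sum_{n=1}^{\infty} \frac{2(-1)^n z^2}{z^2 - n^2}$, where for $z = 0$ the left side is interpreted as $1$. -/
open Complex

noncomputable section
open Real Filter

private lemma csc_hasDerivAt_aux (z : ℂ) (n : ℤ) (hd : z ^ 2 - (n : ℂ) ^ 2 ≠ 0) (w : ℂ) :
    HasDerivAt (fun w : ℂ => Complex.exp (-I * n * w) *
        (-I * n * Complex.cos (z * w) + z * Complex.sin (z * w)) / (z ^ 2 - (n : ℂ) ^ 2))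
      (Complex.exp (-I * n * w) * Complex.cos (z * w)) w := by
  have h1 : HasDerivAt (fun w : ℂ => Complex.exp (-I * n * w))
      (-I * n * Complex.exp (-I * n * w)) w := by
    have := (Complex.hasDerivAt_exp (-I * n * w)).comp w
      ((hasDerivAt_id w).const_mul (-I * (n : ℂ)))
    simp only [Function.comp_def, id_eq, mul_one] at this
    refine this.congr_deriv ?_
    ring
  have h2 : HasDerivAt (fun w : ℂ => Complex.cos (z * w)) (-Complex.sin (z * w) * z) w := by
    exact ((Complex.hasDerivAt_cos (z * w)).comp w ((hasDerivAt_id w).const_mul z)).congr_deriv (by simp)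
  have h3 : HasDerivAt (fun w : ℂ => Complex.sin (z * w)) (Complex.cos (z * w) * z) w := by
    exact ((Complex.hasDerivAt_sin (z * w)).comp w ((hasDerivAt_id w).const_mul z)).congr_deriv (by simp)
  have h4 := (h2.const_mul (-I * (n : ℂ))).add (h3.const_mul z)
  have h5 := (h1.mul h4).div_const (z ^ 2 - (n : ℂ) ^ 2)
  refine h5.congr_deriv (Eq.symm ?_)
  rw [eq_div_iff hd]
  simp only [Pi.add_apply]
  ring_nf
  simp only [Complex.I_sq]
  ring

private lemma csc_integral_aux (z : ℂ) (n : ℤ) (hd : z ^ 2 - (n : ℂ) ^ 2 ≠ 0) :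
    ∫ x : ℝ in (-π)..π, Complex.exp (-I * n * x) * Complex.cos (z * x)
      = (-1 : ℂ) ^ n * (2 * z * Complex.sin (π * z)) / (z ^ 2 - (n : ℂ) ^ 2) := by
  have hcont : Continuous (fun x : ℝ => Complex.exp (-I * n * x) * Complex.cos (z * x)) := by
    fun_prop
  rw [intervalIntegral.integral_eq_sub_of_hasDerivAt
    (fun x _ => ((csc_hasDerivAt_aux z n hd x).comp_ofReal)) (hcont.intervalIntegrable _ _)]
  have he : ∀ t : ℂ, Complex.exp (-I * n * t) = Complex.exp (t * I) ^ (-n) := by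
    intro t
    rw [← Complex.exp_int_mul]
    congr 1
    push_cast
    ring
  have hpi : Complex.exp (-I * n * (π : ℝ)) = (-1 : ℂ) ^ (-n) := by
    have hcos : Complex.cos (π : ℝ) = -1 := by rw [← Complex.ofReal_cos]; simp
    have hsin : Complex.sin (π : ℝ) = 0 := by rw [← Complex.ofReal_sin]; simp
    rw [he, Complex.exp_mul_I, hcos, hsin]
    norm_num
  have hneg : (-1 : ℂ) ^ (-n) = (-1 : ℂ) ^ n := by
    rw [zpow_neg, ← inv_zpow, inv_neg, inv_one]
  have hpi' : Complex.exp (-I * n * ((-π : ℝ) : ℂ)) = (-1 : ℂ) ^ n := by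
    have hcos : Complex.cos ((-π : ℝ) : ℂ) = -1 := by rw [← Complex.ofReal_cos]; simp
    have hsin : Complex.sin ((-π : ℝ) : ℂ) = 0 := by rw [← Complex.ofReal_sin]; simp
    rw [he, Complex.exp_mul_I, hcos, hsin, ← hneg]
    norm_num
  rw [hpi, hpi', hneg]
  have hc : Complex.cos (z * ((-π : ℝ) : ℂ)) = Complex.cos (z * (π : ℝ)) := by
    push_cast; rw [mul_neg, Complex.cos_neg]
  have hs : Complex.sin (z * ((-π : ℝ) : ℂ)) = -Complex.sin (z * (π : ℝ)) := by
    push_cast; rw [mul_neg, Complex.sin_neg]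
  rw [hc, hs]
  have : Complex.sin ((π : ℝ) * z) = Complex.sin (z * (π : ℝ)) := by rw [mul_comm]
  rw [this]
  field_simp
  ring

private lemma csc_coeff_aux [hT : Fact (0 < 2 * π)] (z : ℂ) (n : ℤ)
    (hd : z ^ 2 - (n : ℂ) ^ 2 ≠ 0) :
    fourierCoeff (AddCircle.liftIco (2 * π) (-π) fun x : ℝ => Complex.cos (z * x)) n
      = (-1 : ℂ) ^ n * z * Complex.sin (π * z) / (π * (z ^ 2 - (n : ℂ) ^ 2)) := by
  rw [fourierCoeff_liftIco_eq, fourierCoeffOn_eq_integral]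
  simp only [show -π + 2 * π - -π = 2 * π from by ring, show -π + 2 * π = π from by ring,
    smul_eq_mul]
  rw [intervalIntegral.integral_congr
    (g := fun x : ℝ => Complex.exp (-I * n * x) * Complex.cos (z * x))
    (fun x _ => by
      simp only [fourier_coe_apply, smul_eq_mul,
        show -π + 2 * π - -π = 2 * π from by ring]
      congr 2
      push_cast
      have h2π : ((2 * π : ℝ) : ℂ) ≠ 0 := by
        push_cast; exact mul_ne_zero two_ne_zero (by exact_mod_cast Real.pi_ne_zero)
      rw [div_eq_iff (by push_cast at h2π ⊢; exact h2π)]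
      ring)]
  rw [csc_integral_aux z n hd, Complex.real_smul]
  have hπ : (π : ℂ) ≠ 0 := by exact_mod_cast Real.pi_ne_zero
  push_cast
  rw [show Complex.sin ((π : ℂ) * z) = Complex.sin (z * (π : ℂ)) from by rw [mul_comm]]
  rw [← mul_div_assoc, div_eq_div_iff hd (mul_ne_zero hπ hd)]
  field_simp
  ring

private lemma csc_summable_aux (z : ℂ) :
    Summable (fun n : ℤ => (-1 : ℂ) ^ n * z * Complex.sin ((π : ℂ) * z) /
      ((π : ℂ) * (z ^ 2 - (n : ℂ) ^ 2))) := by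
  set A : ℝ := ‖z * Complex.sin ((π : ℂ) * z)‖ with hA
  have hA0 : 0 ≤ A := norm_nonneg _
  have hg : Summable (fun n : ℤ => 2 * (A / π) * (1 / (n : ℝ) ^ 2)) :=
    (Real.summable_one_div_int_pow.mpr one_lt_two).mul_left _
  apply Summable.of_norm_bounded_eventually hg
  have hfin : {n : ℤ | ¬ 2 * ‖z‖ + 1 ≤ |(n : ℝ)|}.Finite := by
    apply Set.Finite.subset (Set.finite_Icc (-(⌈2 * ‖z‖ + 1⌉ : ℤ)) ⌈2 * ‖z‖ + 1⌉)
    intro n hn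
    simp only [Set.mem_setOf_eq, not_le] at hn
    have h1 : |(n : ℝ)| ≤ ((⌈2 * ‖z‖ + 1⌉ : ℤ) : ℝ) := le_trans hn.le (Int.le_ceil _)
    rw [← Int.cast_abs] at h1
    have h2 : |n| ≤ ⌈2 * ‖z‖ + 1⌉ := by exact_mod_cast h1
    simpa [Set.mem_Icc] using abs_le.mp h2
  rw [Filter.eventually_cofinite]
  apply hfin.subset
  intro n hn
  simp only [Set.mem_setOf_eq] at hn ⊢
  intro hle
  apply hn
  have hz0 : (0 : ℝ) ≤ ‖z‖ := norm_nonneg _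
  have hn2 : 2 * ‖z‖ ^ 2 + 1 ≤ (n : ℝ) ^ 2 := by
    have h3 : (2 * ‖z‖ + 1) ^ 2 ≤ (n : ℝ) ^ 2 := by
      rw [← _root_.sq_abs (n : ℝ)]
      exact pow_le_pow_left₀ (by positivity) hle 2
    nlinarith
  have hnn : (0:ℝ) < (n : ℝ) ^ 2 := by nlinarith
  have hlow : (n : ℝ) ^ 2 / 2 ≤ ‖z ^ 2 - (n : ℂ) ^ 2‖ := by
    have h1 : ‖((n : ℤ) : ℂ) ^ 2‖ - ‖z ^ 2‖ ≤ ‖(n : ℂ) ^ 2 - z ^ 2‖ := norm_sub_norm_le _ _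
    have h2 : ‖((n : ℤ) : ℂ) ^ 2‖ = (n : ℝ) ^ 2 := by
      rw [norm_pow]
      rw [show ((n : ℤ) : ℂ) = ((n : ℝ) : ℂ) by push_cast; ring, Complex.norm_real,
        Real.norm_eq_abs, _root_.sq_abs]
    have h3 : ‖z ^ 2‖ = ‖z‖ ^ 2 := norm_pow _ _
    rw [norm_sub_rev]
    rw [h2, h3] at h1
    nlinarith
  have hDpos : (0:ℝ) < ‖z ^ 2 - (n : ℂ) ^ 2‖ := by nlinarith
  have heq : ‖(-1 : ℂ) ^ n * z * Complex.sin ((π : ℂ) * z) /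
      ((π : ℂ) * (z ^ 2 - (n : ℂ) ^ 2))‖ = A / (π * ‖z ^ 2 - (n : ℂ) ^ 2‖) := by
    rw [norm_div, norm_mul, norm_mul, norm_zpow, norm_neg, norm_one, one_zpow, one_mul,
      norm_mul, Complex.norm_real, Real.norm_eq_abs, abs_of_pos Real.pi_pos, hA, norm_mul]
  rw [heq]
  calc A / (π * ‖z ^ 2 - (n : ℂ) ^ 2‖) ≤ A / (π * ((n:ℝ)^2/2)) := by
        gcongr
    _ = 2 * (A / π) * (1 / (n : ℝ) ^ 2) := by
        field_simp

theorem stmt_10 (z : ℂ) (hz : ∀ n : ℤ, n ≠ 0 → z ≠ (n : ℂ)) :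
    (if z = 0 then (1 : ℂ) else (Real.pi : ℂ) * z / Complex.sin ((Real.pi : ℂ) * z)) =
      1 + ∑' n : ℕ+, 2 * (-1) ^ (n : ℕ) * z ^ 2 / (z ^ 2 - (n : ℂ) ^ 2) := by
  rcases eq_or_ne z 0 with hz0 | hz0
  · subst hz0
    rw [if_pos rfl]
    have h0 : ∀ n : ℕ+, (2 * (-1 : ℂ) ^ (n : ℕ) * (0:ℂ) ^ 2 / ((0:ℂ) ^ 2 - (n : ℂ) ^ 2)) = 0 := by
      intro n; simp
    rw [tsum_congr h0, tsum_zero, add_zero]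
  · rw [if_neg hz0]
    haveI : Fact (0 < 2 * π) := ⟨by positivity⟩
    have hπ : (π : ℂ) ≠ 0 := by exact_mod_cast Real.pi_ne_zero
    have hz' : ∀ n : ℤ, z ≠ (n : ℂ) := by
      intro n
      rcases eq_or_ne n 0 with rfl | hn
      · simpa using hz0
      · exact hz n hn
    have hd : ∀ n : ℤ, z ^ 2 - (n : ℂ) ^ 2 ≠ 0 := by
      intro n
      have h1 : z - (n : ℂ) ≠ 0 := sub_ne_zero.mpr (hz' n)
      have h2 : z + (n : ℂ) ≠ 0 := by
        intro h
        apply hz' (-n)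
        push_cast
        linear_combination h
      have h3 : z ^ 2 - (n : ℂ) ^ 2 = (z - n) * (z + n) := by ring
      rw [h3]
      exact mul_ne_zero h1 h2
    have hs : Complex.sin ((π : ℂ) * z) ≠ 0 := by
      rw [Complex.sin_ne_zero_iff]
      intro k h
      apply hz' k
      apply mul_left_cancel₀ hπ
      rw [h]; ring
    set c : ℤ → ℂ := fun n => (-1 : ℂ) ^ n * z * Complex.sin ((π : ℂ) * z) /
      ((π : ℂ) * (z ^ 2 - (n : ℂ) ^ 2)) with hc
    have hFc : Continuous (AddCircle.liftIco (2 * π) (-π) fun x : ℝ => Complex.cos (z * x)) := by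
      apply AddCircle.liftIco_continuous
      · rw [show (-π + 2 * π : ℝ) = π by ring]
        push_cast
        rw [mul_neg, Complex.cos_neg]
      · exact Continuous.continuousOn (by fun_prop)
    set F : C(AddCircle (2 * π), ℂ) :=
      ⟨AddCircle.liftIco (2 * π) (-π) fun x : ℝ => Complex.cos (z * x), hFc⟩ with hF
    have hco : ∀ n : ℤ, fourierCoeff (⇑F) n = c n := fun n => csc_coeff_aux z n (hd n)
    have hsummable : Summable (fourierCoeff (⇑F)) :=
      (csc_summable_aux z).congr fun n => (hco n).symm
    have hpt := has_pointwise_sum_fourier_series_of_summable hsummable (0 : AddCircle (2 * π))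
    have hF0 : F (0 : AddCircle (2 * π)) = 1 := by
      rw [hF]
      simp only [ContinuousMap.coe_mk]
      rw [show (0 : AddCircle (2 * π)) = ((0 : ℝ) : AddCircle (2 * π)) from rfl,
        AddCircle.liftIco_coe_apply (by constructor <;> [linarith [Real.pi_pos];
          linarith [Real.pi_pos]])]
      simp
    rw [hF0] at hpt
    have h1 : HasSum c 1 := by
      refine hpt.congr_fun fun i => ?_
      rw [fourier_eval_zero, smul_eq_mul, mul_one, hco]
    have hceven : ∀ n : ℤ, c (-n) = c n := by
      intro n
      show (-1 : ℂ) ^ (-n) * z * _ / ((π:ℂ) * (z ^ 2 - ((-n : ℤ) : ℂ) ^ 2)) = _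
      rw [zpow_neg, ← inv_zpow, inv_neg, inv_one]
      push_cast
      rw [neg_sq]
    have h2' : HasSum (fun n : ℕ => 2 * c n) (1 + c 0) := by
      refine h1.nat_add_neg.congr_fun fun n => ?_
      rw [hceven]; ring
    have h3 : HasSum (fun n : ℕ => 2 * c ((n : ℤ) + 1)) (1 + c 0 - 2 * c 0) := by
      have h := (hasSum_nat_add_iff' (f := fun n : ℕ => 2 * c n) 1).mpr h2'
      simp only [Finset.sum_range_one, Nat.cast_zero] at h
      refine h.congr_fun fun n => ?_
      push_cast
      ring_nf
    have hc0 : c 0 = Complex.sin ((π : ℂ) * z) / ((π : ℂ) * z) := by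
      show (-1 : ℂ) ^ (0 : ℤ) * z * _ / ((π:ℂ) * (z ^ 2 - ((0:ℤ) : ℂ) ^ 2)) = _
      push_cast
      rw [zpow_zero]
      field_simp
      ring
    have h4 := h3.mul_left ((π : ℂ) * z / Complex.sin ((π : ℂ) * z))
    have hval : (π : ℂ) * z / Complex.sin ((π : ℂ) * z) * (1 + c 0 - 2 * c 0)
        = (π : ℂ) * z / Complex.sin ((π : ℂ) * z) - 1 := by
      rw [hc0]
      field_simp
      ring
    rw [hval] at h4
    have h5 : HasSum (fun n : ℕ => 2 * (-1 : ℂ) ^ (n + 1) * z ^ 2 / (z ^ 2 - ((n : ℂ) + 1) ^ 2))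
        ((π : ℂ) * z / Complex.sin ((π : ℂ) * z) - 1) := by
      refine h4.congr_fun fun n => ?_
      have hdn := hd ((n : ℤ) + 1)
      push_cast at hdn
      simp only [hc]
      rw [show ((n : ℤ) + 1) = ((n + 1 : ℕ) : ℤ) by push_cast; ring, zpow_natCast]
      push_cast
      have hs' : Complex.sin (z * π) ≠ 0 := by rwa [mul_comm]
      field_simp
    have h6 : HasSum (fun m : ℕ+ => 2 * (-1 : ℂ) ^ ((m : ℕ)) * z ^ 2 / (z ^ 2 - ((m : ℕ) : ℂ) ^ 2))
        ((π : ℂ) * z / Complex.sin ((π : ℂ) * z) - 1) := by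
      apply (Equiv.pnatEquivNat.symm.hasSum_iff).mp
      refine h5.congr_fun fun n => ?_
      simp [Equiv.pnatEquivNat, Function.comp]
    rw [h6.tsum_eq]
    ring

end
end

section
/- Let $a$ be a complex number with $a \neq 0,-1,-2,\dots$ and let $z$ be a complex number such that $a+z$ and $a-z$ avoid the nonpositive integers. Then $\frac{\Gamma(a+z)\Gamma(a-z)}{\Gamma(a)^2} = \prod_{k=1}^{\infty}\left(1 - \left(\frac{z}{a-1+k}\right)^2\right)^{-1}$. -/
open Complex Filter Finset Asymptotics Topology

theorem stmt_11 (a z : ℂ) (ha : ∀ k : ℕ, a ≠ -(k : ℂ))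
    (hz₁ : ∀ k : ℕ, a + z ≠ -(k : ℂ)) (hz₂ : ∀ k : ℕ, a - z ≠ -(k : ℂ)) :
    Complex.Gamma (a + z) * Complex.Gamma (a - z) / Complex.Gamma a ^ 2 =
      ∏' k : ℕ+, (1 - (z / (a - 1 + (k : ℂ))) ^ 2)⁻¹ := by
  set f : ℕ → ℂ := fun n => (1 - (z / (a + n)) ^ 2)⁻¹ with hf
  have hane : ∀ n : ℕ, a + (n : ℂ) ≠ 0 := by
    intro n h; exact ha n (by linear_combination h)
  have hAne : ∀ n : ℕ, a + z + (n : ℂ) ≠ 0 := by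
    intro n h; exact hz₁ n (by linear_combination h)
  have hBne : ∀ n : ℕ, a - z + (n : ℂ) ≠ 0 := by
    intro n h; exact hz₂ n (by linear_combination h)
  have hDne : ∀ n : ℕ, (a + n) ^ 2 - z ^ 2 ≠ 0 := by
    intro n h
    have : (a + z + n) * (a - z + n) = 0 := by linear_combination h
    rcases mul_eq_zero.1 this with h' | h'
    · exact hAne n h'
    · exact hBne n h'
  have hfval : ∀ n : ℕ, f n = (a + n) ^ 2 / ((a + z + n) * (a - z + n)) := by
    intro n
    have h0 := hane n
    have h1 := hAne n
    have h2 := hBne n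
    have key0 : (1 - (z / (a + n)) ^ 2) * ((a + n) ^ 2 / ((a + z + n) * (a - z + n))) = 1 := by
      field_simp
      ring
    rw [hf]
    exact inv_eq_of_mul_eq_one_right key0
  have hfne : ∀ n : ℕ, f n ≠ 0 := by
    intro n
    rw [hfval n]
    exact div_ne_zero (pow_ne_zero 2 (hane n)) (mul_ne_zero (hAne n) (hBne n))
  set w : ℕ → ℂ := fun n => z ^ 2 / ((a + n) ^ 2 - z ^ 2) with hwdef
  have hfw : ∀ n : ℕ, f n = 1 + w n := by
    intro n
    have hD := hDne n
    rw [hfval n, hwdef]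
    have h2 : (a + z + n) * (a - z + n) = (a + n) ^ 2 - z ^ 2 := by ring
    rw [h2]
    field_simp
    ring
  have hwO : (fun n : ℕ => w n) =O[atTop] fun n : ℕ => ((n : ℝ) ^ 2)⁻¹ := by
    have hq : Tendsto (fun n : ℕ => w n * (n : ℂ) ^ 2) atTop (𝓝 (z ^ 2)) := by
      have h0 : ∀ c : ℂ, Tendsto (fun n : ℕ => c / n) atTop (𝓝 0) := by
        intro c
        rw [tendsto_zero_iff_norm_tendsto_zero]
        have := tendsto_const_div_atTop_nhds_zero_nat ‖c‖
        refine this.congr fun n => ?_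
        simp [norm_div]
      have hinv : Tendsto (fun n : ℕ => ((a / n + 1) ^ 2 - (z / n) ^ 2)) atTop (𝓝 1) := by
        have h1 : Tendsto (fun n : ℕ => a / n + 1) atTop (𝓝 (0 + 1)) :=
          (h0 a).add tendsto_const_nhds
        have := (h1.pow 2).sub ((h0 z).pow 2)
        simpa using this
      have h1 : Tendsto (fun n : ℕ => ((a / n + 1) ^ 2 - (z / n) ^ 2)⁻¹) atTop (𝓝 1) := by
        simpa using hinv.inv₀ one_ne_zero
      have heq : ∀ᶠ n : ℕ in atTop,
          z ^ 2 * ((a / n + 1) ^ 2 - (z / n) ^ 2)⁻¹ = w n * (n : ℂ) ^ 2 := by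
        filter_upwards [eventually_ge_atTop 1] with n hn
        have hn0 : (n : ℂ) ≠ 0 := Nat.cast_ne_zero.mpr (by omega)
        have hD := hDne n
        have hstep : (a / n + 1) ^ 2 - (z / n) ^ 2 = ((a + n) ^ 2 - z ^ 2) / (n : ℂ) ^ 2 := by
          field_simp
        rw [hstep, hwdef, inv_div]
        field_simp
      have := (tendsto_const_nhds (x := z ^ 2)).mul h1
      simp only [mul_one] at this
      exact this.congr' heq
    have hO1 : (fun n : ℕ => w n * (n : ℂ) ^ 2) =O[atTop] (fun _ : ℕ => (1 : ℝ)) :=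
      hq.isBigO_one ℝ
    have hO2 : (fun n : ℕ => ((n : ℂ) ^ 2)⁻¹) =O[atTop] fun n : ℕ => ((n : ℝ) ^ 2)⁻¹ := by
      apply isBigO_of_le
      intro n
      simp [norm_inv, norm_pow]
    have hO3 := hO1.mul hO2
    simp only [one_mul] at hO3
    refine hO3.congr' ?_ (EventuallyEq.refl _ _)
    filter_upwards [eventually_ge_atTop 1] with n hn
    have hn0 : (n : ℂ) ≠ 0 := Nat.cast_ne_zero.mpr (by omega)
    field_simp
  have hg2 : Summable fun n : ℕ => ((n : ℝ) ^ 2)⁻¹ :=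
    (Real.summable_one_div_nat_pow.mpr one_lt_two).congr (by intro n; simp)
  have hwsum : Summable w := summable_of_isBigO_nat hg2 hwO
  have hwnormsum : Summable fun n => ‖w n‖ := summable_of_isBigO_nat hg2 hwO.norm_left
  have hlogsum : Summable fun n => Complex.log (f n) := by
    apply Summable.of_norm_bounded_eventually_nat (g := fun n => 3 / 2 * ‖w n‖)
      (hwnormsum.mul_left _)
    have hw0 : Tendsto (fun n => ‖w n‖) atTop (𝓝 0) :=
      tendsto_zero_iff_norm_tendsto_zero.mp hwsum.tendsto_atTop_zero
    have hsmall : ∀ᶠ n : ℕ in atTop, ‖w n‖ ≤ 1 / 2 := by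
      filter_upwards [hw0.eventually_le_const (by norm_num : (0:ℝ) < 1/2)] with n hn
      exact hn
    filter_upwards [hsmall] with n hn
    rw [hfw n]
    exact Complex.norm_log_one_add_half_le_self hn
  have hM : Multipliable f :=
    Complex.multipliable_of_summable_log hlogsum
  have hTP : Tendsto (fun n : ℕ => ∏ j ∈ range (n + 1), f j) atTop (𝓝 (∏' n, f n)) :=
    hM.hasProd.tendsto_prod_nat.comp (tendsto_add_atTop_nat 1)
  have key : ∀ᶠ n : ℕ in atTop, ∏ j ∈ range (n + 1), f j =
      GammaSeq (a + z) n * GammaSeq (a - z) n / GammaSeq a n ^ 2 := by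
    filter_upwards [eventually_ge_atTop 1] with n hn
    have hn0 : (n : ℂ) ≠ 0 := Nat.cast_ne_zero.mpr (by omega)
    set A := ∏ j ∈ range (n + 1), (a + z + (j : ℂ)) with hA
    set B := ∏ j ∈ range (n + 1), (a - z + (j : ℂ)) with hB
    set C := ∏ j ∈ range (n + 1), (a + (j : ℂ)) with hC
    have hAne' : A ≠ 0 := Finset.prod_ne_zero_iff.mpr fun j _ => hAne j
    have hBne' : B ≠ 0 := Finset.prod_ne_zero_iff.mpr fun j _ => hBne j
    have hCne' : C ≠ 0 := Finset.prod_ne_zero_iff.mpr fun j _ => hane j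
    have hprod : ∏ j ∈ range (n + 1), f j = C ^ 2 / (A * B) := by
      rw [hA, hB, hC, ← Finset.prod_pow, ← Finset.prod_mul_distrib, ← Finset.prod_div_distrib]
      exact Finset.prod_congr rfl fun j _ => hfval j
    have hfact : (n.factorial : ℂ) ≠ 0 := Nat.cast_ne_zero.mpr (Nat.factorial_ne_zero n)
    have hpowne : (n : ℂ) ^ a ≠ 0 := by
      rw [Complex.cpow_def_of_ne_zero hn0]; exact Complex.exp_ne_zero _
    have hpowne1 : (n : ℂ) ^ (a + z) ≠ 0 := by
      rw [Complex.cpow_def_of_ne_zero hn0]; exact Complex.exp_ne_zero _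
    have hpowne2 : (n : ℂ) ^ (a - z) ≠ 0 := by
      rw [Complex.cpow_def_of_ne_zero hn0]; exact Complex.exp_ne_zero _
    have hpow : (n : ℂ) ^ (a + z) * (n : ℂ) ^ (a - z) = ((n : ℂ) ^ a) ^ 2 := by
      rw [← Complex.cpow_add _ _ hn0, sq, ← Complex.cpow_add _ _ hn0]
      ring_nf
    rw [hprod, GammaSeq, GammaSeq, GammaSeq, ← hA, ← hB, ← hC]
    field_simp
    linear_combination hpow.symm
  have hGa : Complex.Gamma a ≠ 0 := Complex.Gamma_ne_zero ha
  have hTG : Tendsto (fun n : ℕ => GammaSeq (a + z) n * GammaSeq (a - z) n / GammaSeq a n ^ 2)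
      atTop (𝓝 (Complex.Gamma (a + z) * Complex.Gamma (a - z) / Complex.Gamma a ^ 2)) :=
    (((GammaSeq_tendsto_Gamma (a + z)).mul (GammaSeq_tendsto_Gamma (a - z))).div
      ((GammaSeq_tendsto_Gamma a).pow 2)) (pow_ne_zero 2 hGa)
  rw [tendsto_nhds_unique hTG (hTP.congr' key)]
  rw [← Equiv.pnatEquivNat.symm.tprod_eq (fun k : ℕ+ => (1 - (z / (a - 1 + (k : ℂ))) ^ 2)⁻¹)]
  apply tprod_congr
  intro n
  have hcast : ((Equiv.pnatEquivNat.symm n : ℕ+) : ℂ) = (n : ℂ) + 1 := by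
    simp [Equiv.pnatEquivNat, Nat.succPNat]
  simp only [hcast, hf]
  ring_nf
end
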